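/- Unfolding a labeled semilattice tree: let Ξ₀ be a finite meet-semilattice tree with root A₀, labeled by positive integers n_A for A ∈ Ξ₀, such that n_{A₀} = 1 and n_{A⁻} divides n_A whenever A ≠ A₀ (A⁻ the predecessor of A in Ξ₀). Then there exists a partial order Ξ which is a disjoint union of antichains U_A (A ∈ Ξ₀) with |U_A| = n_A, such that: each element of U_A (A ≠ A₀) lies above exactly one element of U_{A⁻}, each element of U_{A⁻} lies below exactly n_A/n_{A⁻} elements of U_A, the order on Ξ is generated by these covering relations, Ξ is a meet-semilattice tree, and the quotient map U_A ↦ A is order-preserving with the induced order on {U_A} isomorphic to Ξ₀. Moreover Ξ is unique up to isomorphism over Ξ₀, and every automorphism of (Ξ₀, (n_A)) lifts to an automorphism of Ξ. -/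

import Mathlib

/-- An unfolding of a finite labeled meet-semilattice tree `Ξ₀` (with labels
`n : Ξ₀ → ℕ` and predecessor function `pred`): a meet-semilattice tree `X` together
with a projection `π : X → Ξ₀` whose fibers `U_A` are antichains of cardinality
`n A`, such that comparabilities project to comparabilities, every element of a
fiber has exactly one element below it in each smaller fiber, and each element of
the fiber over `pred A` lies below exactly `n A / n (pred A)` elements of the fiber
over `A`. -/
structure Unfolding (Ξ₀ : Type*) [SemilatticeInf Ξ₀] [OrderBot Ξ₀]
    (n : Ξ₀ → ℕ) (pred : Ξ₀ → Ξ₀) : Type _ where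
  X : Type
  le : X → X → Prop
  po : IsPartialOrder X le
  π : X → Ξ₀
  fiber_card : ∀ A : Ξ₀, Nat.card {x : X // π x = A} = n A
  fiber_antichain : ∀ x y : X, π x = π y → le x y → x = y
  mono : ∀ x y : X, le x y → π x ≤ π y
  below_unique : ∀ (x : X) (A : Ξ₀), A ≤ π x → ∃! y : X, π y = A ∧ le y x
  fiber_over : ∀ A : Ξ₀, A ≠ ⊥ → ∀ y : X, π y = pred A →
      Nat.card {x : X // π x = A ∧ le y x ∧ y ≠ x} = n A / n (pred A)
  chains : ∀ x y z : X, le y x → le z x → le y z ∨ le z y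
  glb : ∀ x y : X, ∃ m : X, le m x ∧ le m y ∧ ∀ z, le z x → le z y → le z m



section Tree
variable {Ξ₀ : Type*} [SemilatticeInf Ξ₀] [OrderBot Ξ₀] [Fintype Ξ₀]
variable {n : Ξ₀ → ℕ} {pred : Ξ₀ → Ξ₀}

theorem tree_le_pred (hchain : ∀ x y z : Ξ₀, y ≤ x → z ≤ x → y ≤ z ∨ z ≤ y)
    (hpred : ∀ A : Ξ₀, A ≠ ⊥ → pred A ⋖ A) {A B : Ξ₀} (hA : A ≠ ⊥) (h : B < A) :
    B ≤ pred A := by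
  rcases hchain A B (pred A) h.le (hpred A hA).le with hc | hc
  · exact hc
  · rcases hc.lt_or_eq with hlt | he
    · exact absurd h ((hpred A hA).2 hlt)
    · exact he.ge

theorem tree_dvd (hchain : ∀ x y z : Ξ₀, y ≤ x → z ≤ x → y ≤ z ∨ z ≤ y)
    (hpred : ∀ A : Ξ₀, A ≠ ⊥ → pred A ⋖ A)
    (hdvd : ∀ A : Ξ₀, A ≠ ⊥ → n (pred A) ∣ n A) {A B : Ξ₀} (h : B ≤ A) :
    n B ∣ n A := by
  induction A using WellFoundedLT.induction with
  | ind A ih =>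
    rcases h.lt_or_eq with hlt | he
    · have hA : A ≠ ⊥ := by rintro rfl; exact absurd hlt (by simp)
      exact (ih (pred A) (hpred A hA).lt (tree_le_pred hchain hpred hA hlt)).trans
        (hdvd A hA)
    · exact he ▸ dvd_rfl

theorem tree_pred_unique (hchain : ∀ x y z : Ξ₀, y ≤ x → z ≤ x → y ≤ z ∨ z ≤ y)
    {A B C : Ξ₀} (hB : B ⋖ A) (hC : C ⋖ A) : B = C := by
  rcases hchain A B C hB.le hC.le with hc | hc
  · rcases hc.lt_or_eq with hlt | he
    · exact absurd hC.lt (hB.2 hlt)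
    · exact he
  · rcases hc.lt_or_eq with hlt | he
    · exact absurd hB.lt (hC.2 hlt)
    · exact he.symm
end Tree

/-- counting lemma -/
noncomputable def modCountEquiv {N d r : ℕ} (hd : 0 < d) (hdvd : d ∣ N) (hr : r < d) :
    {m : ℕ // m < N ∧ m % d = r} ≃ Fin (N / d) where
  toFun m := ⟨m.1 / d, Nat.div_lt_div_of_lt_of_dvd hdvd m.2.1⟩
  invFun j := ⟨j.1 * d + r, by
    constructor
    · have h1 : j.1 + 1 ≤ N / d := j.2
      have h2 : (j.1 + 1) * d ≤ (N / d) * d := Nat.mul_le_mul_right d h1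
      rw [Nat.div_mul_cancel hdvd] at h2
      calc j.1 * d + r < j.1 * d + d := by omega
        _ = (j.1 + 1) * d := by ring
        _ ≤ N := h2
    · rw [Nat.mul_add_mod'] at *; exact Nat.mod_eq_of_lt hr⟩
  left_inv m := by
    ext
    have h1 := Nat.div_add_mod m.1 d
    have h2 := m.2.2
    have h3 : d * (m.1 / d) = m.1 / d * d := Nat.mul_comm _ _
    show m.1 / d * d + r = m.1
    omega
  right_inv j := by
    ext
    show (j.1 * d + r) / d = j.1
    rw [Nat.mul_comm (j.1:ℕ) d, Nat.mul_add_div hd, Nat.div_eq_of_lt hr]; omega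
    

section Canon
variable (Ξ₀ : Type*) [SemilatticeInf Ξ₀] [OrderBot Ξ₀] [Fintype Ξ₀]

noncomputable def canonUnfolding
    (hchain : ∀ x y z : Ξ₀, y ≤ x → z ≤ x → y ≤ z ∨ z ≤ y)
    (n : Ξ₀ → ℕ) (pred : Ξ₀ → Ξ₀)
    (hpos : ∀ A, 0 < n A) (hbot : n ⊥ = 1)
    (hpred : ∀ A : Ξ₀, A ≠ ⊥ → pred A ⋖ A)
    (hdvd : ∀ A : Ξ₀, A ≠ ⊥ → n (pred A) ∣ n A) :
    Unfolding Ξ₀ n pred := by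
  classical
  set E : Fin (Fintype.card Ξ₀) ≃ Ξ₀ := (Fintype.equivFin Ξ₀).symm with hE
  have dvdle : ∀ {B A : Ξ₀}, B ≤ A → n B ∣ n A := fun h => tree_dvd hchain hpred hdvd h
  refine
  { X := {p : Fin (Fintype.card Ξ₀) × ℕ // p.2 < n (E p.1)}
    le := fun x y => E x.1.1 ≤ E y.1.1 ∧ x.1.2 = y.1.2 % n (E x.1.1)
    π := fun x => E x.1.1
    po := { refl := ?_, trans := ?_, antisymm := ?_ }
    fiber_card := ?_, fiber_antichain := ?_, mono := ?_,
    below_unique := ?_, fiber_over := ?_, chains := ?_, glb := ?_ }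
  · exact fun x => ⟨le_rfl, (Nat.mod_eq_of_lt x.2).symm⟩
  · rintro x y z ⟨h1, h2⟩ ⟨h3, h4⟩
    refine ⟨h1.trans h3, ?_⟩
    rw [h2, h4, Nat.mod_mod_of_dvd _ (dvdle h1)]
  · rintro x y ⟨h1, h2⟩ ⟨h3, h4⟩
    have hA : E x.1.1 = E y.1.1 := le_antisymm h1 h3
    rw [hA, Nat.mod_eq_of_lt y.2] at h2
    exact Subtype.ext (Prod.ext (E.injective hA) h2)
  · intro A
    have e : {x : {p : Fin (Fintype.card Ξ₀) × ℕ // p.2 < n (E p.1)} // E x.1.1 = A}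
        ≃ Fin (n A) :=
      { toFun := fun x => ⟨x.1.1.2, by have h := x.1.2; rw [x.2] at h; exact h⟩
        invFun := fun m => ⟨⟨⟨E.symm A, m.1⟩, by
            have h := m.2; rw [show E (E.symm A) = A from E.apply_symm_apply A]; exact h⟩,
          E.apply_symm_apply A⟩
        left_inv := fun x => Subtype.ext (Subtype.ext
          (Prod.ext (E.symm_apply_eq.mpr x.2.symm) rfl))
        right_inv := fun m => rfl }
    rw [Nat.card_congr e, Nat.card_eq_fintype_card, Fintype.card_fin]
  · rintro x y hπ ⟨h1, h2⟩
    have hA : E x.1.1 = E y.1.1 := hπ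
    rw [hA, Nat.mod_eq_of_lt y.2] at h2
    exact Subtype.ext (Prod.ext (E.injective hA) h2)
  · rintro x y ⟨h1, _⟩; exact h1
  · intro x A hA
    have hEA : E (E.symm A) = A := E.apply_symm_apply A
    refine ⟨⟨⟨E.symm A, x.1.2 % n A⟩, by rw [hEA]; exact Nat.mod_lt _ (hpos A)⟩,
      ⟨hEA, by show E (E.symm A) ≤ E x.1.1; rw [hEA]; exact hA,
        by show x.1.2 % n A = x.1.2 % n (E (E.symm A)); rw [hEA]⟩, ?_⟩
    rintro z ⟨hz1, hz2, hz3⟩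
    have hz1' : E z.1.1 = A := hz1
    rw [hz1'] at hz3
    refine Subtype.ext (Prod.ext (E.injective (by rw [hEA, hz1'])) hz3)
  · intro A hA y hy
    have hplt : pred A < A := (hpred A hA).lt
    have hy' : E y.1.1 = pred A := hy
    have e : {x : {p : Fin (Fintype.card Ξ₀) × ℕ // p.2 < n (E p.1)} //
        E x.1.1 = A ∧ (E y.1.1 ≤ E x.1.1 ∧ y.1.2 = x.1.2 % n (E y.1.1)) ∧ y ≠ x}
        ≃ {m : ℕ // m < n A ∧ m % n (pred A) = y.1.2} :=
      { toFun := fun x => ⟨x.1.1.2, by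
          obtain ⟨h1, ⟨h2, h3⟩, h4⟩ := x.2
          have h3' : y.1.2 = x.1.1.2 % n (pred A) :=
            h3.trans (congrArg (fun B => x.1.1.2 % n B) hy')
          have h5 : x.1.1.2 < n A := lt_of_lt_of_eq x.1.2 (congrArg n h1)
          exact ⟨h5, h3'.symm⟩⟩
        invFun := fun m => ⟨⟨⟨E.symm A, m.1⟩, by
            have h := m.2.1; rw [show E (E.symm A) = A from E.apply_symm_apply A]
            exact h⟩, by
          have hEA : E (E.symm A) = A := E.apply_symm_apply A
          refine ⟨hEA, ⟨by show E y.1.1 ≤ E (E.symm A); rw [hEA, hy']; exact hplt.le,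
            by show y.1.2 = m.1 % n (E y.1.1); rw [hy']; exact m.2.2.symm⟩, ?_⟩
          intro hcon
          have h6 : E y.1.1 = E (E.symm A) := congrArg (fun z : Subtype _ => E z.1.1) hcon
          rw [hEA, hy'] at h6
          exact absurd h6 hplt.ne⟩
        left_inv := fun x => Subtype.ext (Subtype.ext
          (Prod.ext (E.symm_apply_eq.mpr x.2.1.symm) rfl))
        right_inv := fun m => rfl }
    rw [Nat.card_congr e, Nat.card_congr (modCountEquiv (hpos (pred A))
      (hdvd A hA) (by rw [← hy']; exact y.2)), Nat.card_eq_fintype_card,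
      Fintype.card_fin]
  · rintro x y z ⟨h1, h2⟩ ⟨h3, h4⟩
    rcases hchain (E x.1.1) (E y.1.1) (E z.1.1) h1 h3 with hc | hc
    · exact Or.inl ⟨hc, by rw [h2, h4, Nat.mod_mod_of_dvd _ (dvdle hc)]⟩
    · exact Or.inr ⟨hc, by rw [h2, h4, Nat.mod_mod_of_dvd _ (dvdle hc)]⟩
  · intro x y
    classical
    set S : Finset Ξ₀ := Finset.univ.filter
      (fun B => B ≤ E x.1.1 ⊓ E y.1.1 ∧ x.1.2 % n B = y.1.2 % n B) with hS
    have hbotS : ⊥ ∈ S := by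
      simp only [hS, Finset.mem_filter, Finset.mem_univ, true_and]
      exact ⟨bot_le, by rw [hbot]; omega⟩
    obtain ⟨C, hCS, hCmax⟩ := S.exists_maximal ⟨⊥, hbotS⟩
    have hCS' : C ≤ E x.1.1 ⊓ E y.1.1 ∧ x.1.2 % n C = y.1.2 % n C := by
      simpa only [hS, Finset.mem_filter, Finset.mem_univ, true_and] using hCS
    have hCle : ∀ B ∈ S, B ≤ C := by
      intro B hB
      have hB' : B ≤ E x.1.1 ⊓ E y.1.1 ∧ x.1.2 % n B = y.1.2 % n B := by
        simpa only [hS, Finset.mem_filter, Finset.mem_univ, true_and] using hB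
      rcases hchain (E x.1.1) B C (hB'.1.trans inf_le_left)
        (hCS'.1.trans inf_le_left) with hc | hc
      · exact hc
      · rcases hc.lt_or_eq with hlt | he
        · exact absurd hlt (not_lt_of_ge (hCmax hB hlt.le))
        · exact he.ge
    have hEC : E (E.symm C) = C := E.apply_symm_apply C
    refine ⟨⟨⟨E.symm C, x.1.2 % n C⟩, by rw [hEC]; exact Nat.mod_lt _ (hpos C)⟩,
      ⟨by show E (E.symm C) ≤ E x.1.1; rw [hEC]; exact hCS'.1.trans inf_le_left,
       by show x.1.2 % n C = x.1.2 % n (E (E.symm C)); rw [hEC]⟩,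
      ⟨by show E (E.symm C) ≤ E y.1.1; rw [hEC]; exact hCS'.1.trans inf_le_right,
       by show x.1.2 % n C = y.1.2 % n (E (E.symm C)); rw [hEC]; exact hCS'.2⟩, ?_⟩
    rintro z ⟨hz1, hz2⟩ ⟨hz3, hz4⟩
    have hzS : E z.1.1 ∈ S := by
      simp only [hS, Finset.mem_filter, Finset.mem_univ, true_and]
      exact ⟨le_inf hz1 hz3, by omega⟩
    have hzC : E z.1.1 ≤ C := hCle _ hzS
    refine ⟨by rw [hEC]; exact hzC, ?_⟩
    show z.1.2 = (x.1.2 % n C) % n (E z.1.1)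
    rw [hz2, Nat.mod_mod_of_dvd _ (dvdle hzC)]
end Canon

section Maps
variable {Ξ₀ : Type*} [SemilatticeInf Ξ₀] [OrderBot Ξ₀] [Fintype Ξ₀]
  {n : Ξ₀ → ℕ} {pred : Ξ₀ → Ξ₀}

namespace Unfolding
variable (U : Unfolding Ξ₀ n pred)

theorem le_refl' (x : U.X) : U.le x x := by haveI := U.po; exact refl_of U.le x
theorem le_trans' {x y z : U.X} (h1 : U.le x y) (h2 : U.le y z) : U.le x z :=
  U.po.toIsPreorder.toIsTrans.trans x y z h1 h2

open Classical in
noncomputable def dn (x : U.X) (A : Ξ₀) : U.X :=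
  if h : A ≤ U.π x then (U.below_unique x A h).choose else x

variable {U}

theorem π_dn {x : U.X} {A : Ξ₀} (h : A ≤ U.π x) : U.π (U.dn x A) = A := by
  classical rw [dn, dif_pos h]; exact (U.below_unique x A h).choose_spec.1.1

theorem dn_le {x : U.X} {A : Ξ₀} (h : A ≤ U.π x) : U.le (U.dn x A) x := by
  classical rw [dn, dif_pos h]; exact (U.below_unique x A h).choose_spec.1.2

theorem dn_unique {x y : U.X} {A : Ξ₀} (h : A ≤ U.π x) (h1 : U.π y = A)
    (h2 : U.le y x) : y = U.dn x A := by
  classical rw [dn, dif_pos h]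
  exact (U.below_unique x A h).choose_spec.2 y ⟨h1, h2⟩

theorem dn_self (x : U.X) : U.dn x (U.π x) = x :=
  (dn_unique le_rfl rfl (U.le_refl' x)).symm

theorem dn_of_le {x y : U.X} (h : U.le y x) : U.dn x (U.π y) = y :=
  (dn_unique (U.mono y x h) rfl h).symm

theorem le_iff {x y : U.X} : U.le y x ↔ U.π y ≤ U.π x ∧ y = U.dn x (U.π y) := by
  constructor
  · intro h; exact ⟨U.mono y x h, dn_unique (U.mono y x h) rfl h⟩
  · rintro ⟨h1, h2⟩; rw [h2]; exact dn_le h1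

theorem dn_dn {x : U.X} {A B : Ξ₀} (hA : A ≤ U.π x) (hB : B ≤ A) :
    U.dn (U.dn x A) B = U.dn x B := by
  have h1 : B ≤ U.π (U.dn x A) := by rw [π_dn hA]; exact hB
  exact dn_unique (hB.trans hA) (π_dn h1)
    (U.le_trans' (dn_le h1) (dn_le hA)) |>.symm ▸ rfl

theorem dn_of_le_dn {x y : U.X} (h : U.le y x) {B : Ξ₀} (hB : B ≤ U.π y) :
    U.dn y B = U.dn x B :=
  dn_unique (hB.trans (U.mono y x h)) (π_dn hB) (U.le_trans' (dn_le hB) h)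

variable (U)

theorem fiber_finite (hpos : ∀ A, 0 < n A) (A : Ξ₀) : Finite {x : U.X // U.π x = A} :=
  Nat.finite_of_card_ne_zero (by rw [U.fiber_card]; exact (hpos A).ne')

theorem fiber_bot_nonempty (hpos : ∀ A, 0 < n A) :
    Nonempty {x : U.X // U.π x = ⊥} :=
  (Nat.card_pos_iff.mp (by rw [U.fiber_card]; exact hpos ⊥)).1

noncomputable def bot (hpos : ∀ A, 0 < n A) : U.X :=
  (U.fiber_bot_nonempty hpos).some.1

theorem π_bot (hpos : ∀ A, 0 < n A) : U.π (U.bot hpos) = ⊥ :=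
  (U.fiber_bot_nonempty hpos).some.2

theorem eq_bot (hpos : ∀ A, 0 < n A) (hbot : n ⊥ = 1) {x : U.X} (h : U.π x = ⊥) :
    x = U.bot hpos := by
  have hcard : Nat.card {x : U.X // U.π x = ⊥} = 1 := by rw [U.fiber_card, hbot]
  have hsub : Subsingleton {x : U.X // U.π x = ⊥} :=
    Nat.card_eq_one_iff_unique.mp hcard |>.1
  have := @Subsingleton.elim _ hsub ⟨x, h⟩ ⟨U.bot hpos, U.π_bot hpos⟩
  exact congrArg Subtype.val this

end Unfolding
end Maps

noncomputable def equivOfNatCardEq {α β : Type*} (hα : Nat.card α ≠ 0)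
    (h : Nat.card α = Nat.card β) : α ≃ β := by
  have h1 : Finite α := Nat.finite_of_card_ne_zero hα
  have h2 : Finite β := Nat.finite_of_card_ne_zero (h ▸ hα)
  have := Fintype.ofFinite α
  have := Fintype.ofFinite β
  exact Fintype.equivOfCardEq
    (by rwa [← Nat.card_eq_fintype_card, ← Nat.card_eq_fintype_card])

section Iso
variable {Ξ₀ : Type*} [SemilatticeInf Ξ₀] [OrderBot Ξ₀] [Fintype Ξ₀]
  {n : Ξ₀ → ℕ} {pred : Ξ₀ → Ξ₀}

/-- The block over `u` at level `A`. -/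
def blkT (U : Unfolding Ξ₀ n pred) (A : Ξ₀) (u : U.X) : Type :=
  {x : U.X // U.π x = A ∧ U.le u x ∧ u ≠ x}

theorem blk_card (U : Unfolding Ξ₀ n pred) {A : Ξ₀} (hA : A ≠ ⊥) {u : U.X}
    (hu : U.π u = pred A) : Nat.card (blkT U A u) = n A / n (pred A) :=
  U.fiber_over A hA u hu

theorem blk_card_ne (hpos : ∀ A, 0 < n A)
    (hdvd : ∀ A : Ξ₀, A ≠ ⊥ → n (pred A) ∣ n A) {A : Ξ₀}
    (h : A ≠ ⊥) : n A / n (pred A) ≠ 0 :=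
  (Nat.div_pos (Nat.le_of_dvd (hpos A) (hdvd A h)) (hpos (pred A))).ne'

open Classical in
noncomputable def blockE (hpos : ∀ A, 0 < n A)
    (hdvd : ∀ A : Ξ₀, A ≠ ⊥ → n (pred A) ∣ n A)
    (U V : Unfolding Ξ₀ n pred) (A : Ξ₀) (u : U.X) (v : V.X) : U.X → V.X :=
  if h : A ≠ ⊥ ∧ U.π u = pred A ∧ V.π v = pred A then
    fun x =>
      if hx : U.π x = A ∧ U.le u x ∧ u ≠ x then
        ((equivOfNatCardEq
            (by rw [blk_card U h.1 h.2.1]; exact blk_card_ne hpos hdvd h.1)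
            ((blk_card U h.1 h.2.1).trans (blk_card V h.1 h.2.2).symm))
          (⟨x, hx⟩ : blkT U A u)).1
      else V.bot hpos
  else fun _ => V.bot hpos

variable {hpos : ∀ A, 0 < n A} {hdvd : ∀ A : Ξ₀, A ≠ ⊥ → n (pred A) ∣ n A}
  {U V : Unfolding Ξ₀ n pred}

theorem blockE_mem {A : Ξ₀} {u : U.X} {v : V.X}
    (h : A ≠ ⊥ ∧ U.π u = pred A ∧ V.π v = pred A) {x : U.X}
    (hx : U.π x = A ∧ U.le u x ∧ u ≠ x) :
    V.π (blockE hpos hdvd U V A u v x) = A ∧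
      V.le v (blockE hpos hdvd U V A u v x) ∧ v ≠ blockE hpos hdvd U V A u v x := by
  classical
  rw [blockE, dif_pos h]
  simp only [dif_pos hx]
  exact ((equivOfNatCardEq
      (by rw [blk_card U h.1 h.2.1]; exact blk_card_ne hpos hdvd h.1)
      ((blk_card U h.1 h.2.1).trans (blk_card V h.1 h.2.2).symm))
    (⟨x, hx⟩ : blkT U A u)).2

theorem blockE_inj {A : Ξ₀} {u : U.X} {v : V.X}
    (h : A ≠ ⊥ ∧ U.π u = pred A ∧ V.π v = pred A) {x x' : U.X}
    (hx : U.π x = A ∧ U.le u x ∧ u ≠ x) (hx' : U.π x' = A ∧ U.le u x' ∧ u ≠ x')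
    (he : blockE hpos hdvd U V A u v x = blockE hpos hdvd U V A u v x') : x = x' := by
  classical
  rw [blockE, dif_pos h] at he
  simp only [dif_pos hx, dif_pos hx'] at he
  have := (equivOfNatCardEq
      (by rw [blk_card U h.1 h.2.1]; exact blk_card_ne hpos hdvd h.1)
      ((blk_card U h.1 h.2.1).trans (blk_card V h.1 h.2.2).symm)).injective
    (Subtype.ext he)
  exact congrArg Subtype.val this

theorem blockE_surj {A : Ξ₀} {u : U.X} {v : V.X}
    (h : A ≠ ⊥ ∧ U.π u = pred A ∧ V.π v = pred A) {y : V.X}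
    (hy : V.π y = A ∧ V.le v y ∧ v ≠ y) :
    ∃ x : U.X, (U.π x = A ∧ U.le u x ∧ u ≠ x) ∧
      blockE hpos hdvd U V A u v x = y := by
  classical
  set e := equivOfNatCardEq
      (by rw [blk_card U h.1 h.2.1]; exact blk_card_ne hpos hdvd h.1)
      ((blk_card U h.1 h.2.1).trans (blk_card V h.1 h.2.2).symm) with hedef
  refine ⟨(e.symm ⟨y, hy⟩).1, (e.symm ⟨y, hy⟩).2, ?_⟩
  rw [blockE, dif_pos h]
  simp only [dif_pos (e.symm ⟨y, hy⟩).2]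
  have : (⟨(e.symm ⟨y, hy⟩).1, (e.symm ⟨y, hy⟩).2⟩ : blkT U A u) = e.symm ⟨y, hy⟩ :=
    Subtype.ext rfl
  rw [this]
  exact congrArg Subtype.val (e.apply_symm_apply (⟨y, hy⟩ : blkT V A v))
end Iso

section Unf
variable {Ξ₀ : Type*} [SemilatticeInf Ξ₀] [OrderBot Ξ₀] [Fintype Ξ₀]
  {n : Ξ₀ → ℕ} {pred : Ξ₀ → Ξ₀}

local instance : WellFoundedRelation Ξ₀ := WellFoundedLT.toWellFoundedRelation

open Classical in
noncomputable def unf (hpos : ∀ A, 0 < n A)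
    (hpred : ∀ A : Ξ₀, A ≠ ⊥ → pred A ⋖ A)
    (hdvd : ∀ A : Ξ₀, A ≠ ⊥ → n (pred A) ∣ n A)
    (U V : Unfolding Ξ₀ n pred) (x : U.X) : V.X :=
  if h : U.π x = ⊥ then V.bot hpos
  else
    blockE hpos hdvd U V (U.π x) (U.dn x (pred (U.π x)))
      (unf hpos hpred hdvd U V (U.dn x (pred (U.π x)))) x
termination_by U.π x
decreasing_by
  rw [Unfolding.π_dn (hpred (U.π x) h).le]
  exact (hpred _ h).lt
end Unf
section UnfProps
variable {Ξ₀ : Type*} [SemilatticeInf Ξ₀] [OrderBot Ξ₀] [Fintype Ξ₀]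
  {n : Ξ₀ → ℕ} {pred : Ξ₀ → Ξ₀}
  (hchain : ∀ x y z : Ξ₀, y ≤ x → z ≤ x → y ≤ z ∨ z ≤ y)
  (hpos : ∀ A, 0 < n A) (hbot : n ⊥ = 1)
  (hpred : ∀ A : Ξ₀, A ≠ ⊥ → pred A ⋖ A)
  (hdvd : ∀ A : Ξ₀, A ≠ ⊥ → n (pred A) ∣ n A)
  (U V : Unfolding Ξ₀ n pred)

theorem π_unf : ∀ x : U.X, V.π (unf hpos hpred hdvd U V x) = U.π x := by
  suffices key : ∀ A : Ξ₀, ∀ x : U.X, U.π x = A →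
      V.π (unf hpos hpred hdvd U V x) = U.π x from fun x => key (U.π x) x rfl
  intro A
  induction A using WellFoundedLT.induction with
  | ind A ih =>
    intro x hx
    subst hx
    by_cases h : U.π x = ⊥
    · rw [unf, dif_pos h, V.π_bot hpos, h]
    · rw [unf, dif_neg h]
      have hπu : U.π (U.dn x (pred (U.π x))) = pred (U.π x) :=
        Unfolding.π_dn (hpred _ h).le
      have hIH : V.π (unf hpos hpred hdvd U V (U.dn x (pred (U.π x)))) = pred (U.π x) := by
        rw [ih (pred (U.π x)) (hpred _ h).lt _ hπu, hπu]
      have hne : U.dn x (pred (U.π x)) ≠ x := by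
        intro hc
        rw [hc] at hπu
        exact (hpred _ h).lt.ne' hπu
      exact (blockE_mem ⟨h, hπu, hIH⟩
        ⟨rfl, Unfolding.dn_le (hpred _ h).le, hne⟩).1

theorem unf_step {x : U.X} (h : U.π x ≠ ⊥) :
    V.le (unf hpos hpred hdvd U V (U.dn x (pred (U.π x)))) (unf hpos hpred hdvd U V x) ∧
    unf hpos hpred hdvd U V (U.dn x (pred (U.π x))) ≠ unf hpos hpred hdvd U V x := by
  have hπu : U.π (U.dn x (pred (U.π x))) = pred (U.π x) :=
    Unfolding.π_dn (hpred _ h).le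
  have hIH : V.π (unf hpos hpred hdvd U V (U.dn x (pred (U.π x)))) = pred (U.π x) := by
    rw [π_unf hpos hpred hdvd U V _, hπu]
  have hne : U.dn x (pred (U.π x)) ≠ x := by
    intro hc; rw [hc] at hπu; exact (hpred _ h).lt.ne' hπu
  have := blockE_mem (hpos := hpos) (hdvd := hdvd) ⟨h, hπu, hIH⟩
    ⟨rfl, Unfolding.dn_le (hpred _ h).le, hne⟩
  have hunf : unf hpos hpred hdvd U V x = blockE hpos hdvd U V (U.π x)
      (U.dn x (pred (U.π x))) (unf hpos hpred hdvd U V (U.dn x (pred (U.π x)))) x := by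
    rw [unf, dif_neg h]
  rw [hunf]
  exact ⟨this.2.1, this.2.2⟩

include hchain in
theorem unf_dn : ∀ (x : U.X) (B : Ξ₀), B ≤ U.π x →
    unf hpos hpred hdvd U V (U.dn x B) = V.dn (unf hpos hpred hdvd U V x) B := by
  suffices key : ∀ A : Ξ₀, ∀ x : U.X, U.π x = A → ∀ B : Ξ₀, B ≤ U.π x →
      unf hpos hpred hdvd U V (U.dn x B) = V.dn (unf hpos hpred hdvd U V x) B from
    fun x => key (U.π x) x rfl
  intro A
  induction A using WellFoundedLT.induction with
  | ind A ih =>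
    intro x hx B hB
    subst hx
    rcases hB.lt_or_eq with hlt | he
    · have h : U.π x ≠ ⊥ := by
        intro hc; rw [hc] at hlt; exact (not_lt_bot hlt)
      have hBp : B ≤ pred (U.π x) := tree_le_pred hchain hpred h hlt
      set u := U.dn x (pred (U.π x)) with hu
      have hπu : U.π u = pred (U.π x) := Unfolding.π_dn (hpred _ h).le
      have hle : U.le u x := Unfolding.dn_le (hpred _ h).le
      have h1 : U.dn x B = U.dn u B :=
        (Unfolding.dn_of_le_dn hle (by rw [hπu]; exact hBp)).symm
      have h2 := ih (pred (U.π x)) (hpred _ h).lt u hπu B (by rw [hπu]; exact hBp)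
      have hstep := unf_step hpos hpred hdvd U V h
      have hπfu : V.π (unf hpos hpred hdvd U V u) = pred (U.π x) := by
        rw [π_unf hpos hpred hdvd U V u, hπu]
      have hπfx : V.π (unf hpos hpred hdvd U V x) = U.π x :=
        π_unf hpos hpred hdvd U V x
      have h3 : unf hpos hpred hdvd U V u =
          V.dn (unf hpos hpred hdvd U V x) (pred (U.π x)) :=
        Unfolding.dn_unique (by rw [hπfx]; exact (hpred _ h).le) hπfu hstep.1
      rw [h1, h2, h3, Unfolding.dn_dn (by rw [hπfx]; exact (hpred _ h).le) hBp]
    · rw [he, Unfolding.dn_self]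
      have hπfx : V.π (unf hpos hpred hdvd U V x) = U.π x :=
        π_unf hpos hpred hdvd U V x
      conv_rhs => rw [← hπfx, Unfolding.dn_self]

include hchain hbot in
theorem unf_inj : ∀ x x' : U.X,
    unf hpos hpred hdvd U V x = unf hpos hpred hdvd U V x' → x = x' := by
  suffices key : ∀ A : Ξ₀, ∀ x x' : U.X, U.π x = A →
      unf hpos hpred hdvd U V x = unf hpos hpred hdvd U V x' → x = x' from
    fun x x' => key (U.π x) x x' rfl
  intro A
  induction A using WellFoundedLT.induction with
  | ind A ih =>
    intro x x' hx he
    subst hx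
    have hππ : U.π x = U.π x' := by
      rw [← π_unf hpos hpred hdvd U V x, ← π_unf hpos hpred hdvd U V x', he]
    by_cases h : U.π x = ⊥
    · exact (U.eq_bot hpos hbot h).trans (U.eq_bot hpos hbot (hππ ▸ h)).symm
    · have h' : U.π x' ≠ ⊥ := fun hc => h (hππ.trans hc)
      set u := U.dn x (pred (U.π x)) with hu
      set u' := U.dn x' (pred (U.π x')) with hu'
      have hπu : U.π u = pred (U.π x) := Unfolding.π_dn (hpred _ h).le
      have hπu' : U.π u' = pred (U.π x') := Unfolding.π_dn (hpred _ h').le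
      have hequ : unf hpos hpred hdvd U V u = unf hpos hpred hdvd U V u' := by
        have l1 := unf_dn hchain hpos hpred hdvd U V x (pred (U.π x)) (hpred _ h).le
        have l2 := unf_dn hchain hpos hpred hdvd U V x' (pred (U.π x')) (hpred _ h').le
        rw [← hu] at l1; rw [← hu'] at l2
        rw [l1, l2, he, hππ]
      have huu : u = u' := ih (pred (U.π x)) (hpred _ h).lt u u' hπu hequ
      have hne : u ≠ x := by
        intro hc; rw [hc] at hπu; exact (hpred _ h).lt.ne' hπu
      have hne' : u' ≠ x' := by
        intro hc; rw [hc] at hπu'; exact (hpred _ h').lt.ne' hπu'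
      have hfu : V.π (unf hpos hpred hdvd U V u) = pred (U.π x) := by
        rw [π_unf hpos hpred hdvd U V u, hπu]
      have hunf1 : unf hpos hpred hdvd U V x = blockE hpos hdvd U V (U.π x)
          u (unf hpos hpred hdvd U V u) x := by
        rw [hu]; rw [unf, dif_neg h]
      have hunf2 : unf hpos hpred hdvd U V x' = blockE hpos hdvd U V (U.π x')
          u' (unf hpos hpred hdvd U V u') x' := by
        rw [hu']; rw [unf, dif_neg h']
      rw [hunf1, hunf2, ← hππ, ← huu] at he
      have hle' : U.le u x' := huu ▸ Unfolding.dn_le (hpred _ h').le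
      have hne2 : u ≠ x' := huu ▸ hne'
      exact blockE_inj (hpos := hpos) (hdvd := hdvd) ⟨h, hπu, hfu⟩
        ⟨rfl, Unfolding.dn_le (hpred _ h).le, hne⟩
        ⟨hππ.symm, hle', hne2⟩
        he

include hchain hbot in
theorem unf_surj : ∀ y : V.X, ∃ x : U.X, unf hpos hpred hdvd U V x = y := by
  suffices key : ∀ A : Ξ₀, ∀ y : V.X, V.π y = A →
      ∃ x : U.X, unf hpos hpred hdvd U V x = y from fun y => key (V.π y) y rfl
  intro A
  induction A using WellFoundedLT.induction with
  | ind A ih =>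
    intro y hy
    subst hy
    by_cases h : V.π y = ⊥
    · refine ⟨U.bot hpos, ?_⟩
      have hb : U.π (U.bot hpos) = ⊥ := U.π_bot hpos
      have : unf hpos hpred hdvd U V (U.bot hpos) = V.bot hpos := by
        rw [unf, dif_pos hb]
      rw [this, ← V.eq_bot hpos hbot h]
    · set v := V.dn y (pred (V.π y)) with hv
      have hπv : V.π v = pred (V.π y) := Unfolding.π_dn (hpred _ h).le
      obtain ⟨p, hp⟩ := ih (pred (V.π y)) (hpred _ h).lt v hπv
      have hπp : U.π p = pred (V.π y) := by
        rw [← π_unf hpos hpred hdvd U V p, hp, hπv]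
      have hnev : v ≠ y := by
        intro hc; rw [hc] at hπv; exact (hpred _ h).lt.ne' hπv
      obtain ⟨x, hxmem, hxe⟩ := blockE_surj (hpos := hpos) (hdvd := hdvd)
        (u := p) (v := v) ⟨h, hπp, hπv⟩
        ⟨rfl, Unfolding.dn_le (hpred _ h).le, hnev⟩
      refine ⟨x, ?_⟩
      have hπx : U.π x = V.π y := hxmem.1
      have hxb : U.π x ≠ ⊥ := by rw [hπx]; exact h
      have hdnx : U.dn x (pred (U.π x)) = p := by
        have : U.π p = pred (U.π x) := by rw [hπp, hπx]
        rw [← this]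
        exact Unfolding.dn_of_le hxmem.2.1
      have hunf : unf hpos hpred hdvd U V x = blockE hpos hdvd U V (U.π x)
          (U.dn x (pred (U.π x))) (unf hpos hpred hdvd U V (U.dn x (pred (U.π x)))) x := by
        rw [unf, dif_neg hxb]
      rw [hunf, hdnx, hp, hπx]
      exact hxe

include hchain hbot in
theorem unf_le_iff : ∀ x y : U.X, U.le x y ↔
    V.le (unf hpos hpred hdvd U V x) (unf hpos hpred hdvd U V y) := by
  intro x y
  constructor
  · intro hle
    have h1 : U.dn y (U.π x) = x := Unfolding.dn_of_le hle
    have h2 := unf_dn hchain hpos hpred hdvd U V y (U.π x) (U.mono x y hle)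
    rw [h1] at h2
    rw [h2]
    exact Unfolding.dn_le (by
      rw [π_unf hpos hpred hdvd U V y]; exact U.mono x y hle)
  · intro hle
    have hππ : U.π x ≤ U.π y := by
      have := V.mono _ _ hle
      rwa [π_unf hpos hpred hdvd U V x, π_unf hpos hpred hdvd U V y] at this
    have h2 := unf_dn hchain hpos hpred hdvd U V y (U.π x) hππ
    have h3 : V.dn (unf hpos hpred hdvd U V y) (U.π x) = unf hpos hpred hdvd U V x :=
      (Unfolding.dn_unique (by rw [π_unf hpos hpred hdvd U V y]; exact hππ)
        (π_unf hpos hpred hdvd U V x) hle).symm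
    rw [h3] at h2
    have := unf_inj hchain hpos hbot hpred hdvd U V _ _ h2
    rw [← this]
    exact Unfolding.dn_le hππ

include hchain hpos hbot hpred hdvd in
theorem exists_iso : ∃ f : U.X ≃ V.X,
    (∀ x, V.π (f x) = U.π x) ∧ ∀ x y, U.le x y ↔ V.le (f x) (f y) := by
  have hbij : Function.Bijective (unf hpos hpred hdvd U V) :=
    ⟨fun a b => unf_inj hchain hpos hbot hpred hdvd U V a b,
     fun y => unf_surj hchain hpos hbot hpred hdvd U V y⟩
  refine ⟨Equiv.ofBijective _ hbij, fun x => π_unf hpos hpred hdvd U V x,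
    fun x y => unf_le_iff hchain hpos hbot hpred hdvd U V x y⟩
end UnfProps


section Twist
variable {Ξ₀ : Type*} [SemilatticeInf Ξ₀] [OrderBot Ξ₀] [Fintype Ξ₀]
  {n : Ξ₀ → ℕ} {pred : Ξ₀ → Ξ₀}

/-- Twist an unfolding by an automorphism of the labeled base. -/
noncomputable def twist
    (hchain : ∀ x y z : Ξ₀, y ≤ x → z ≤ x → y ≤ z ∨ z ≤ y)
    (hpred : ∀ A : Ξ₀, A ≠ ⊥ → pred A ⋖ A)
    (U : Unfolding Ξ₀ n pred) (σ : Ξ₀ ≃o Ξ₀) (hn : ∀ A, n (σ A) = n A) :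
    Unfolding Ξ₀ n pred := by
  have hσbot : σ ⊥ = ⊥ := σ.map_bot
  have hσne : ∀ A : Ξ₀, A ≠ ⊥ → σ A ≠ ⊥ := by
    intro A hA hc
    exact hA (σ.injective (by rw [hc, hσbot]))
  have hσpred : ∀ A : Ξ₀, A ≠ ⊥ → σ (pred A) = pred (σ A) := by
    intro A hA
    exact tree_pred_unique hchain ((apply_covBy_apply_iff σ).mpr (hpred A hA))
      (hpred (σ A) (hσne A hA))
  refine
  { X := U.X
    le := U.le
    po := U.po
    π := fun x => σ.symm (U.π x)
    fiber_card := ?_, fiber_antichain := ?_, mono := ?_,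
    below_unique := ?_, fiber_over := ?_, chains := U.chains, glb := U.glb }
  · intro A
    have e : {x : U.X // σ.symm (U.π x) = A} ≃ {x : U.X // U.π x = σ A} :=
      Equiv.subtypeEquivRight (fun x => σ.symm_apply_eq)
    rw [Nat.card_congr e, U.fiber_card, hn]
  · intro x y hπ hle
    exact U.fiber_antichain x y (σ.symm.injective hπ) hle
  · intro x y hle
    exact σ.symm.monotone (U.mono x y hle)
  · intro x A hA
    have hA' : σ A ≤ U.π x := (σ.le_symm_apply).mp hA
    obtain ⟨y, ⟨hy1, hy2⟩, hy3⟩ := U.below_unique x (σ A) hA'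
    refine ⟨y, ⟨by show σ.symm (U.π y) = A; rw [hy1]; exact σ.symm_apply_apply A, hy2⟩, ?_⟩
    rintro z ⟨hz1, hz2⟩
    exact hy3 z ⟨by rw [← OrderIso.symm_apply_eq]; exact hz1, hz2⟩
  · intro A hA y hy
    have hy' : U.π y = pred (σ A) := by
      rw [← hσpred A hA]; exact (σ.symm_apply_eq).mp hy
    have e : {x : U.X // σ.symm (U.π x) = A ∧ U.le y x ∧ y ≠ x} ≃
        {x : U.X // U.π x = σ A ∧ U.le y x ∧ y ≠ x} :=
      Equiv.subtypeEquivRight (fun x => and_congr_left (fun _ => σ.symm_apply_eq))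
    rw [Nat.card_congr e, U.fiber_over (σ A) (hσne A hA) y hy', hn,
      ← hσpred A hA, hn]
end Twist

theorem unfolding_exists_unique_lifts (Ξ₀ : Type*) [SemilatticeInf Ξ₀]
    [OrderBot Ξ₀] [Fintype Ξ₀]
    (hchain : ∀ x y z : Ξ₀, y ≤ x → z ≤ x → y ≤ z ∨ z ≤ y)
    (n : Ξ₀ → ℕ) (pred : Ξ₀ → Ξ₀)
    (hpos : ∀ A, 0 < n A) (hbot : n ⊥ = 1)
    (hpred : ∀ A : Ξ₀, A ≠ ⊥ → pred A ⋖ A)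
    (hdvd : ∀ A : Ξ₀, A ≠ ⊥ → n (pred A) ∣ n A) :
    Nonempty (Unfolding Ξ₀ n pred) ∧
    (∀ U V : Unfolding Ξ₀ n pred, ∃ f : U.X ≃ V.X,
      (∀ x, V.π (f x) = U.π x) ∧ ∀ x y, U.le x y ↔ V.le (f x) (f y)) ∧
    (∀ (U : Unfolding Ξ₀ n pred) (σ : Ξ₀ ≃o Ξ₀), (∀ A, n (σ A) = n A) →
      ∃ τ : U.X ≃ U.X,
        (∀ x, U.π (τ x) = σ (U.π x)) ∧ ∀ x y, U.le x y ↔ U.le (τ x) (τ y)) := by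
  refine ⟨⟨canonUnfolding Ξ₀ hchain n pred hpos hbot hpred hdvd⟩, ?_, ?_⟩
  · intro U V
    exact exists_iso hchain hpos hbot hpred hdvd U V
  · intro U σ hn
    obtain ⟨f, hf1, hf2⟩ := exists_iso hchain hpos hbot hpred hdvd U
      (twist hchain hpred U σ hn)
    refine ⟨f, ?_, hf2⟩
    intro x
    have : σ.symm (U.π (f x)) = U.π x := hf1 x
    rw [← this, σ.apply_symm_apply]
    rfl
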